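/- Let ℓ ≥ 0 be an integer. Then the number of tuples m ∈ X_{E_7}(ℓ) satisfying m_0 = m_7, m_1 = m_6 and m_3 = m_5 equals ∑_{m ∈ X_{E_7}(ℓ)} (−1)^{m_2 + m_5 + m_7}. (This is the cyclic sieving phenomenon of type E_7^{(1)}.) -/

import Mathlib

open Finset

private lemma vec8_0 {α : Type*} (a b c d e f g h : α) : (![a,b,c,d,e,f,g,h]) 0 = a := rfl
private lemma vec8_1 {α : Type*} (a b c d e f g h : α) : (![a,b,c,d,e,f,g,h]) 1 = b := rfl
private lemma vec8_2 {α : Type*} (a b c d e f g h : α) : (![a,b,c,d,e,f,g,h]) 2 = c := rfl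
private lemma vec8_3 {α : Type*} (a b c d e f g h : α) : (![a,b,c,d,e,f,g,h]) 3 = d := rfl
private lemma vec8_4 {α : Type*} (a b c d e f g h : α) : (![a,b,c,d,e,f,g,h]) 4 = e := rfl
private lemma vec8_5 {α : Type*} (a b c d e f g h : α) : (![a,b,c,d,e,f,g,h]) 5 = f := rfl
private lemma vec8_6 {α : Type*} (a b c d e f g h : α) : (![a,b,c,d,e,f,g,h]) 6 = g := rfl
private lemma vec8_7 {α : Type*} (a b c d e f g h : α) : (![a,b,c,d,e,f,g,h]) 7 = h := rfl

private lemma funext8 {u v : Fin 8 → ℕ} (h0 : u 0 = v 0) (h1 : u 1 = v 1) (h2 : u 2 = v 2)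
    (h3 : u 3 = v 3) (h4 : u 4 = v 4) (h5 : u 5 = v 5) (h6 : u 6 = v 6) (h7 : u 7 = v 7) :
    u = v := by
  funext k
  fin_cases k
  · exact h0
  · exact h1
  · exact h2
  · exact h3
  · exact h4
  · exact h5
  · exact h6
  · exact h7

private def e7X (ℓ : ℕ) : Finset (Fin 8 → ℕ) :=
  (Fintype.piFinset fun _ => Finset.range (ℓ + 1)).filter
    (fun m => ∑ i, (![1, 2, 2, 3, 4, 3, 2, 1] : Fin 8 → ℕ) i * m i = ℓ)

private lemma e7nu : ∀ s : Fin 8 → ℕ,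
    ∑ i, (![1, 2, 2, 3, 4, 3, 2, 1] : Fin 8 → ℕ) i * s i
      = s 0 + 2*s 1 + 2*s 2 + 3*s 3 + 4*s 4 + 3*s 5 + 2*s 6 + s 7 := by
  intro s
  rw [Fin.sum_univ_eight]
  norm_num [show ((![1,2,2,3,4,3,2,1] : Fin 8 → ℕ) 0) = 1 from rfl,
    show ((![1,2,2,3,4,3,2,1] : Fin 8 → ℕ) 1) = 2 from rfl,
    show ((![1,2,2,3,4,3,2,1] : Fin 8 → ℕ) 2) = 2 from rfl,
    show ((![1,2,2,3,4,3,2,1] : Fin 8 → ℕ) 3) = 3 from rfl,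
    show ((![1,2,2,3,4,3,2,1] : Fin 8 → ℕ) 4) = 4 from rfl,
    show ((![1,2,2,3,4,3,2,1] : Fin 8 → ℕ) 5) = 3 from rfl,
    show ((![1,2,2,3,4,3,2,1] : Fin 8 → ℕ) 6) = 2 from rfl,
    show ((![1,2,2,3,4,3,2,1] : Fin 8 → ℕ) 7) = 1 from rfl]

private lemma mem_e7X {ℓ : ℕ} {m : Fin 8 → ℕ} :
    m ∈ e7X ℓ ↔ m 0 + 2*m 1 + 2*m 2 + 3*m 3 + 4*m 4 + 3*m 5 + 2*m 6 + m 7 = ℓ := by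
  simp only [e7X, mem_filter, Fintype.mem_piFinset, Finset.mem_range, e7nu]
  constructor
  · rintro ⟨-, h⟩; exact h
  · intro h
    refine ⟨fun i => ?_, h⟩
    fin_cases i <;> simp <;> omega

/-- the "fixed point" predicate for the sign-reversing involution -/
private def e7P (m : Fin 8 → ℕ) : Prop :=
  (m 0 = 0 ∧ Even (m 7)) ∧ (m 1 = 0 ∧ Even (m 2)) ∧ (m 3 = 0 ∧ Even (m 5))

private instance : DecidablePred e7P := fun m => by unfold e7P; infer_instance

private def tog07 (m : Fin 8 → ℕ) : Fin 8 → ℕ :=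
  if Even (m 7) then ![m 0 - 1, m 1, m 2, m 3, m 4, m 5, m 6, m 7 + 1]
  else ![m 0 + 1, m 1, m 2, m 3, m 4, m 5, m 6, m 7 - 1]

private def tog12 (m : Fin 8 → ℕ) : Fin 8 → ℕ :=
  if Even (m 2) then ![m 0, m 1 - 1, m 2 + 1, m 3, m 4, m 5, m 6, m 7]
  else ![m 0, m 1 + 1, m 2 - 1, m 3, m 4, m 5, m 6, m 7]

private def tog35 (m : Fin 8 → ℕ) : Fin 8 → ℕ :=
  if Even (m 5) then ![m 0, m 1, m 2, m 3 - 1, m 4, m 5 + 1, m 6, m 7]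
  else ![m 0, m 1, m 2, m 3 + 1, m 4, m 5 - 1, m 6, m 7]

private def e7g (m : Fin 8 → ℕ) : Fin 8 → ℕ :=
  if m 0 = 0 ∧ Even (m 7) then
    if m 1 = 0 ∧ Even (m 2) then tog35 m else tog12 m
  else tog07 m

private lemma e7g_spec {ℓ : ℕ} {m : Fin 8 → ℕ} (hm : m ∈ e7X ℓ) (hnp : ¬ e7P m) :
    e7g m ∈ e7X ℓ ∧ ¬ e7P (e7g m) ∧ e7g (e7g m) = m ∧ e7g m ≠ m ∧
      (-1:ℤ)^(m 2 + m 5 + m 7) + (-1:ℤ)^(e7g m 2 + e7g m 5 + e7g m 7) = 0 := by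
  rw [mem_e7X] at hm
  by_cases h0 : m 0 = 0 ∧ Even (m 7)
  · by_cases h1 : m 1 = 0 ∧ Even (m 2)
    · -- act on the pair (3,5)
      have h3 : ¬ (m 3 = 0 ∧ Even (m 5)) := fun h => hnp ⟨h0, h1, h⟩
      rcases Nat.even_or_odd (m 5) with h5 | h5
      · have hm3 : m 3 ≠ 0 := fun h => h3 ⟨h, h5⟩
        have h5' : ¬ Even (m 5 + 1) := by simp [Nat.even_add_one, h5]
        have e1 : e7g m = ![m 0, m 1, m 2, m 3 - 1, m 4, m 5 + 1, m 6, m 7] := by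
          rw [e7g, if_pos h0, if_pos h1, tog35, if_pos h5]
        refine ⟨?_, ?_, ?_, ?_, ?_⟩
        · rw [e1, mem_e7X]
          simp only [vec8_0, vec8_1, vec8_2, vec8_3, vec8_4, vec8_5, vec8_6, vec8_7]
          omega
        · rw [e1]; exact fun hP => h5' hP.2.2.2
        · rw [e1, e7g]
          rw [if_pos (by simpa only [vec8_0, vec8_1, vec8_2, vec8_3, vec8_4, vec8_5, vec8_6, vec8_7] using h0), if_pos (by simpa only [vec8_0, vec8_1, vec8_2, vec8_3, vec8_4, vec8_5, vec8_6, vec8_7] using h1), tog35]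
          rw [if_neg (by simpa only [vec8_0, vec8_1, vec8_2, vec8_3, vec8_4, vec8_5, vec8_6, vec8_7] using h5')]
          refine funext8 ?_ ?_ ?_ ?_ ?_ ?_ ?_ ?_ <;>
            simp only [vec8_0, vec8_1, vec8_2, vec8_3, vec8_4, vec8_5, vec8_6, vec8_7] <;> omega
        · rw [e1]; intro hEq
          have := congrFun hEq 5
          rw [vec8_5] at this; omega
        · rw [e1]
          simp only [vec8_2, vec8_5, vec8_7]
          rw [show m 2 + (m 5 + 1) + m 7 = (m 2 + m 5 + m 7) + 1 by omega, pow_succ]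
          ring
      · obtain ⟨t, ht⟩ := h5
        have h5e : Even (m 5 - 1) := by refine ⟨t, by omega⟩
        have h5o : ¬ Even (m 5) := by simp [Nat.not_even_iff_odd.mpr ⟨t, ht⟩]
        have e1 : e7g m = ![m 0, m 1, m 2, m 3 + 1, m 4, m 5 - 1, m 6, m 7] := by
          rw [e7g, if_pos h0, if_pos h1, tog35, if_neg h5o]
        refine ⟨?_, ?_, ?_, ?_, ?_⟩
        · rw [e1, mem_e7X]
          simp only [vec8_0, vec8_1, vec8_2, vec8_3, vec8_4, vec8_5, vec8_6, vec8_7]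
          omega
        · rw [e1]; intro hP; have h := hP.2.2.1; rw [vec8_3] at h; omega
        · rw [e1, e7g]
          rw [if_pos (by simpa only [vec8_0, vec8_1, vec8_2, vec8_3, vec8_4, vec8_5, vec8_6, vec8_7] using h0), if_pos (by simpa only [vec8_0, vec8_1, vec8_2, vec8_3, vec8_4, vec8_5, vec8_6, vec8_7] using h1), tog35]
          rw [if_pos (by simpa only [vec8_0, vec8_1, vec8_2, vec8_3, vec8_4, vec8_5, vec8_6, vec8_7] using h5e)]
          refine funext8 ?_ ?_ ?_ ?_ ?_ ?_ ?_ ?_ <;>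
            simp only [vec8_0, vec8_1, vec8_2, vec8_3, vec8_4, vec8_5, vec8_6, vec8_7] <;> omega
        · rw [e1]; intro hEq
          have := congrFun hEq 3
          rw [vec8_3] at this; omega
        · rw [e1]
          simp only [vec8_2, vec8_5, vec8_7]
          rw [show m 2 + m 5 + m 7 = (m 2 + (m 5 - 1) + m 7) + 1 by omega, pow_succ]
          ring
    · -- act on the pair (1,2)
      rcases Nat.even_or_odd (m 2) with h2 | h2
      · have hm1 : m 1 ≠ 0 := fun h => h1 ⟨h, h2⟩
        have h2' : ¬ Even (m 2 + 1) := by simp [Nat.even_add_one, h2]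
        have e1 : e7g m = ![m 0, m 1 - 1, m 2 + 1, m 3, m 4, m 5, m 6, m 7] := by
          rw [e7g, if_pos h0, if_neg h1, tog12, if_pos h2]
        refine ⟨?_, ?_, ?_, ?_, ?_⟩
        · rw [e1, mem_e7X]
          simp only [vec8_0, vec8_1, vec8_2, vec8_3, vec8_4, vec8_5, vec8_6, vec8_7]
          omega
        · rw [e1]; exact fun hP => h2' hP.2.1.2
        · rw [e1, e7g]
          rw [if_pos (by simpa only [vec8_0, vec8_1, vec8_2, vec8_3, vec8_4, vec8_5, vec8_6, vec8_7] using h0), if_neg (by simpa only [vec8_0, vec8_1, vec8_2, vec8_3, vec8_4, vec8_5, vec8_6, vec8_7] using (show ¬ (m 1 - 1 = 0 ∧ Even (m 2 + 1)) from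
            fun hc => h2' hc.2)), tog12]
          rw [if_neg (by simpa only [vec8_0, vec8_1, vec8_2, vec8_3, vec8_4, vec8_5, vec8_6, vec8_7] using h2')]
          refine funext8 ?_ ?_ ?_ ?_ ?_ ?_ ?_ ?_ <;>
            simp only [vec8_0, vec8_1, vec8_2, vec8_3, vec8_4, vec8_5, vec8_6, vec8_7] <;> omega
        · rw [e1]; intro hEq
          have := congrFun hEq 2
          rw [vec8_2] at this; omega
        · rw [e1]
          simp only [vec8_2, vec8_5, vec8_7]
          rw [show m 2 + 1 + m 5 + m 7 = (m 2 + m 5 + m 7) + 1 by omega, pow_succ]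
          ring
      · obtain ⟨t, ht⟩ := h2
        have h2e : Even (m 2 - 1) := by refine ⟨t, by omega⟩
        have h2o : ¬ Even (m 2) := by simp [Nat.not_even_iff_odd.mpr ⟨t, ht⟩]
        have e1 : e7g m = ![m 0, m 1 + 1, m 2 - 1, m 3, m 4, m 5, m 6, m 7] := by
          rw [e7g, if_pos h0, if_neg h1, tog12, if_neg h2o]
        refine ⟨?_, ?_, ?_, ?_, ?_⟩
        · rw [e1, mem_e7X]
          simp only [vec8_0, vec8_1, vec8_2, vec8_3, vec8_4, vec8_5, vec8_6, vec8_7]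
          omega
        · rw [e1]; intro hP; have h := hP.2.1.1; rw [vec8_1] at h; omega
        · rw [e1, e7g]
          rw [if_pos (by simpa only [vec8_0, vec8_1, vec8_2, vec8_3, vec8_4, vec8_5, vec8_6, vec8_7] using h0), if_neg (by simpa only [vec8_0, vec8_1, vec8_2, vec8_3, vec8_4, vec8_5, vec8_6, vec8_7] using (show ¬ (m 1 + 1 = 0 ∧ Even (m 2 - 1)) from
            fun hc => by omega)), tog12]
          rw [if_pos (by simpa only [vec8_0, vec8_1, vec8_2, vec8_3, vec8_4, vec8_5, vec8_6, vec8_7] using h2e)]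
          refine funext8 ?_ ?_ ?_ ?_ ?_ ?_ ?_ ?_ <;>
            simp only [vec8_0, vec8_1, vec8_2, vec8_3, vec8_4, vec8_5, vec8_6, vec8_7] <;> omega
        · rw [e1]; intro hEq
          have := congrFun hEq 1
          rw [vec8_1] at this; omega
        · rw [e1]
          simp only [vec8_2, vec8_5, vec8_7]
          rw [show m 2 + m 5 + m 7 = (m 2 - 1 + m 5 + m 7) + 1 by omega, pow_succ]
          ring
  · -- act on the pair (0,7)
    rcases Nat.even_or_odd (m 7) with h7 | h7
    · have hm0 : m 0 ≠ 0 := fun h => h0 ⟨h, h7⟩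
      have h7' : ¬ Even (m 7 + 1) := by simp [Nat.even_add_one, h7]
      have e1 : e7g m = ![m 0 - 1, m 1, m 2, m 3, m 4, m 5, m 6, m 7 + 1] := by
        rw [e7g, if_neg h0, tog07, if_pos h7]
      refine ⟨?_, ?_, ?_, ?_, ?_⟩
      · rw [e1, mem_e7X]
        simp only [vec8_0, vec8_1, vec8_2, vec8_3, vec8_4, vec8_5, vec8_6, vec8_7]
        omega
      · rw [e1]; exact fun hP => h7' hP.1.2
      · rw [e1, e7g]
        rw [if_neg (by simpa only [vec8_0, vec8_1, vec8_2, vec8_3, vec8_4, vec8_5, vec8_6, vec8_7] using (show ¬ (m 0 - 1 = 0 ∧ Even (m 7 + 1)) from fun hc => h7' hc.2)), tog07]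
        rw [if_neg (by simpa only [vec8_0, vec8_1, vec8_2, vec8_3, vec8_4, vec8_5, vec8_6, vec8_7] using h7')]
        refine funext8 ?_ ?_ ?_ ?_ ?_ ?_ ?_ ?_ <;>
          simp only [vec8_0, vec8_1, vec8_2, vec8_3, vec8_4, vec8_5, vec8_6, vec8_7] <;> omega
      · rw [e1]; intro hEq
        have := congrFun hEq 7
        rw [vec8_7] at this; omega
      · rw [e1]
        simp only [vec8_2, vec8_5, vec8_7]
        rw [show m 2 + m 5 + (m 7 + 1) = (m 2 + m 5 + m 7) + 1 by omega, pow_succ]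
        ring
    · obtain ⟨t, ht⟩ := h7
      have h7e : Even (m 7 - 1) := by refine ⟨t, by omega⟩
      have h7o : ¬ Even (m 7) := by simp [Nat.not_even_iff_odd.mpr ⟨t, ht⟩]
      have e1 : e7g m = ![m 0 + 1, m 1, m 2, m 3, m 4, m 5, m 6, m 7 - 1] := by
        rw [e7g, if_neg h0, tog07, if_neg h7o]
      refine ⟨?_, ?_, ?_, ?_, ?_⟩
      · rw [e1, mem_e7X]
        simp only [vec8_0, vec8_1, vec8_2, vec8_3, vec8_4, vec8_5, vec8_6, vec8_7]
        omega
      · rw [e1]; intro hP; have h := hP.1.1; rw [vec8_0] at h; omega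
      · rw [e1, e7g]
        rw [if_neg (by simpa only [vec8_0, vec8_1, vec8_2, vec8_3, vec8_4, vec8_5, vec8_6, vec8_7] using (show ¬ (m 0 + 1 = 0 ∧ Even (m 7 - 1)) from fun hc => by omega)), tog07]
        rw [if_pos (by simpa only [vec8_0, vec8_1, vec8_2, vec8_3, vec8_4, vec8_5, vec8_6, vec8_7] using h7e)]
        refine funext8 ?_ ?_ ?_ ?_ ?_ ?_ ?_ ?_ <;>
          simp only [vec8_0, vec8_1, vec8_2, vec8_3, vec8_4, vec8_5, vec8_6, vec8_7] <;> omega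
      · rw [e1]; intro hEq
        have := congrFun hEq 0
        rw [vec8_0] at this; omega
      · rw [e1]
        simp only [vec8_2, vec8_5, vec8_7]
        rw [show m 2 + m 5 + m 7 = (m 2 + m 5 + (m 7 - 1)) + 1 by omega, pow_succ]
        ring

private lemma e7sum0 (ℓ : ℕ) :
    ∑ m ∈ (e7X ℓ).filter (fun m => ¬ e7P m), (-1:ℤ)^(m 2 + m 5 + m 7) = 0 := by
  refine Finset.sum_involution (fun m _ => e7g m) ?_ ?_ ?_ ?_
  · intro m hm
    obtain ⟨hX, hnp⟩ := Finset.mem_filter.mp hm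
    exact (e7g_spec hX hnp).2.2.2.2
  · intro m hm _
    obtain ⟨hX, hnp⟩ := Finset.mem_filter.mp hm
    exact (e7g_spec hX hnp).2.2.2.1
  · intro m hm
    obtain ⟨hX, hnp⟩ := Finset.mem_filter.mp hm
    exact Finset.mem_filter.mpr ⟨(e7g_spec hX hnp).1, (e7g_spec hX hnp).2.1⟩
  · intro m hm
    obtain ⟨hX, hnp⟩ := Finset.mem_filter.mp hm
    exact (e7g_spec hX hnp).2.2.1

private lemma e7sumP (ℓ : ℕ) :
    ∑ m ∈ (e7X ℓ).filter e7P, (-1:ℤ)^(m 2 + m 5 + m 7)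
      = (((e7X ℓ).filter e7P).card : ℤ) := by
  rw [Finset.sum_congr rfl (g := fun _ => (1:ℤ)) (fun m hm => ?_), Finset.sum_const,
    nsmul_eq_mul, mul_one]
  obtain ⟨-, hP⟩ := Finset.mem_filter.mp hm
  obtain ⟨⟨-, h7⟩, ⟨-, h2⟩, ⟨-, h5⟩⟩ := hP
  exact Even.neg_one_pow ((h2.add h5).add h7)

private lemma e7card (ℓ : ℕ) :
    ((e7X ℓ).filter (fun m => m 0 = m 7 ∧ m 1 = m 6 ∧ m 3 = m 5)).card
      = ((e7X ℓ).filter e7P).card := by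
  refine Finset.card_nbij' (fun m => ![0, 0, 2*m 1, 0, m 4, 2*m 3, m 2, 2*m 0])
    (fun m => ![m 7/2, m 2/2, m 6, m 5/2, m 4, m 5/2, m 2/2, m 7/2]) ?_ ?_ ?_ ?_
  · intro m hm
    obtain ⟨hX, hs0, hs1, hs3⟩ := Finset.mem_filter.mp hm
    rw [mem_e7X] at hX
    refine Finset.mem_filter.mpr ⟨mem_e7X.mpr ?_, ?_⟩
    · simp only [vec8_0, vec8_1, vec8_2, vec8_3, vec8_4, vec8_5, vec8_6, vec8_7]
      omega
    · exact ⟨⟨rfl, even_two_mul _⟩, ⟨rfl, even_two_mul _⟩, ⟨rfl, even_two_mul _⟩⟩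
  · intro m hm
    obtain ⟨hX, ⟨hz0, a, ha⟩, ⟨hz1, b, hb⟩, ⟨hz3, c, hc⟩⟩ := Finset.mem_filter.mp hm
    rw [mem_e7X] at hX
    refine Finset.mem_filter.mpr ⟨mem_e7X.mpr ?_, ?_⟩
    · simp only [vec8_0, vec8_1, vec8_2, vec8_3, vec8_4, vec8_5, vec8_6, vec8_7]
      omega
    · exact ⟨rfl, rfl, rfl⟩
  · intro m hm
    obtain ⟨hX, hs0, hs1, hs3⟩ := Finset.mem_filter.mp hm
    refine funext8 ?_ ?_ ?_ ?_ ?_ ?_ ?_ ?_ <;>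
      simp only [vec8_0, vec8_1, vec8_2, vec8_3, vec8_4, vec8_5, vec8_6, vec8_7] <;> omega
  · intro m hm
    obtain ⟨hX, ⟨hz0, a, ha⟩, ⟨hz1, b, hb⟩, ⟨hz3, c, hc⟩⟩ := Finset.mem_filter.mp hm
    refine funext8 ?_ ?_ ?_ ?_ ?_ ?_ ?_ ?_ <;>
      simp only [vec8_0, vec8_1, vec8_2, vec8_3, vec8_4, vec8_5, vec8_6, vec8_7] <;> omega

/-- **Cyclic sieving phenomenon for type `E_7^(1)`.**
For `ℓ ≥ 0`, among the `8`-tuples `m` of nonnegative integers with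
`m_0 + 2m_1 + 2m_2 + 3m_3 + 4m_4 + 3m_5 + 2m_6 + m_7 = ℓ`, the number of those with
`m_0 = m_7`, `m_1 = m_6` and `m_3 = m_5` equals `∑_m (-1)^(m_2 + m_5 + m_7)`. -/
theorem stmt_6 (ℓ : ℕ) :
    let ν : Fin 8 → ℕ := ![1, 2, 2, 3, 4, 3, 2, 1]
    let X : Finset (Fin 8 → ℕ) :=
      (Fintype.piFinset fun _ => Finset.range (ℓ + 1)).filter
        (fun m => ∑ i, ν i * m i = ℓ)
    ((X.filter (fun m => m 0 = m 7 ∧ m 1 = m 6 ∧ m 3 = m 5)).card : ℤ)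
      = ∑ m ∈ X, (-1 : ℤ) ^ (m 2 + m 5 + m 7) := by
  intro ν X
  have hX : X = e7X ℓ := rfl
  rw [hX]
  calc (((e7X ℓ).filter (fun m => m 0 = m 7 ∧ m 1 = m 6 ∧ m 3 = m 5)).card : ℤ)
      = (((e7X ℓ).filter e7P).card : ℤ) := by rw [e7card]
    _ = ∑ m ∈ (e7X ℓ).filter e7P, (-1:ℤ)^(m 2 + m 5 + m 7)
        + ∑ m ∈ (e7X ℓ).filter (fun m => ¬ e7P m), (-1:ℤ)^(m 2 + m 5 + m 7) := by
        rw [e7sumP, e7sum0, add_zero]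
    _ = ∑ m ∈ e7X ℓ, (-1:ℤ)^(m 2 + m 5 + m 7) :=
        Finset.sum_filter_add_sum_filter_not _ _ _
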